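/- Let D be a connected rooted digraph, let x be a vertex of D, and let y be an in-neighbour of x such that N⁻(x)−y cuts y from r, i.e. y is the endpoint of no directed path from r in D−(N⁻(x)−y). Then the rooted digraph D' obtained from D by deleting the arc (y,x) satisfies maxleaf(D') = maxleaf(D). -/

import Mathlib

variable {V : Type*}

/-- Reachability by directed paths in a digraph given by its arc relation. -/
def Reaches (A : V → V → Prop) : V → V → Prop :=
  Relation.ReflTransGen A

/-- Reachability by directed paths avoiding the vertex set `S` (i.e. in `D − S`). -/
def ReachesAvoiding (A : V → V → Prop) (S : Set V) : V → V → Prop :=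
  Relation.ReflTransGen (fun u v => A u v ∧ u ∉ S ∧ v ∉ S)

/-- A rooted digraph: loopless, the distinguished root `r` has indegree 0 and at
least two outneighbours, and there is no arc `(x, y)` with `x ≠ r` and `y` an
outneighbour of `r`. -/
def IsRootedDigraph (A : V → V → Prop) (r : V) : Prop :=
  (∀ v, ¬ A v v) ∧
  (∀ v, ¬ A v r) ∧
  (∃ u v, u ≠ v ∧ A r u ∧ A r v) ∧
  ∀ x y, x ≠ r → A r y → ¬ A x y

/-- A rooted digraph is connected if every vertex is reachable from the root. -/
def RConnected (A : V → V → Prop) (r : V) : Prop :=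
  ∀ v, Reaches A r v

/-- `S` is a cut of the rooted digraph: `S ⊆ V − r` and some vertex outside `S`
is the endpoint of no directed path from `r` in `D − S`. -/
def IsCut (A : V → V → Prop) (r : V) (S : Set V) : Prop :=
  r ∉ S ∧ ∃ z ∉ S, ¬ ReachesAvoiding A S r z

/-- A rooted digraph is 2-connected if it has no cut of size at most 1. -/
def TwoConnected (A : V → V → Prop) (r : V) : Prop :=
  ∀ S : Set V, S.ncard ≤ 1 → ¬ IsCut A r S

/-- `T` is an outbranching of the rooted digraph `(A, r)`: a spanning directed
tree rooted at `r` (every vertex other than `r` has a unique in-arc in `T`, the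
root has none, and every vertex is reachable from `r` in `T`). -/
def IsOutbranching (A : V → V → Prop) (r : V) (T : V → V → Prop) : Prop :=
  (∀ u v, T u v → A u v) ∧
  (∀ v, v ≠ r → ∃! u, T u v) ∧
  (∀ u, ¬ T u r) ∧
  ∀ v, Reaches T r v

/-- The number of leaves (vertices of outdegree 0) of an outbranching `T`. -/
noncomputable def leafCount (T : V → V → Prop) : ℕ :=
  {v | ∀ u, ¬ T v u}.ncard

/-- The maximum number of leaves over all outbranchings. -/
noncomputable def maxleaf (A : V → V → Prop) (r : V) : ℕ :=
  sSup {n | ∃ T : V → V → Prop, IsOutbranching A r T ∧ n = leafCount T}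

/-- Indegree of a vertex. -/
noncomputable def indeg (A : V → V → Prop) (v : V) : ℕ := {u | A u v}.ncard

/-- Outdegree of a vertex. -/
noncomputable def outdeg (A : V → V → Prop) (v : V) : ℕ := {u | A v u}.ncard

/-- A vertex is nice if it has a simple in-arc, i.e. an in-arc not belonging to
a 2-circuit. -/
def Nice (A : V → V → Prop) (v : V) : Prop := ∃ u, A u v ∧ ¬ A v u

/-- A vertex is special if it has indegree at least 3 or a simple in-arc. -/
def Special (A : V → V → Prop) (v : V) : Prop := 3 ≤ indeg A v ∨ Nice A v

/-- A non-special vertex: distinct from `r`, with exactly two in-neighbours,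
both of which are also its outneighbours. -/
def NonSpecial (A : V → V → Prop) (r : V) (v : V) : Prop :=
  v ≠ r ∧ ∃ a b, a ≠ b ∧ {u | A u v} = {a, b} ∧ A v a ∧ A v b

/-- `x 0, …, x 4` is a bipath of length 4: the arcs of `D` incident to the
internal vertices `x 1, x 2, x 3` are exactly the arcs `(x i, x (i+1))` and
`(x (i+1), x i)` of the bipath. -/
def IsBipath4 (A : V → V → Prop) (x : Fin 5 → V) : Prop :=
  Function.Injective x ∧
  ∀ i : Fin 5, 0 < (i : ℕ) → (i : ℕ) < 4 →
    (∀ v, A (x i) v ↔ v = x (i - 1) ∨ v = x (i + 1)) ∧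
    (∀ v, A v (x i) ↔ v = x (i - 1) ∨ v = x (i + 1))

/-- A digraph is acyclic if it has no directed cycle. -/
def Acyclic (A : V → V → Prop) : Prop :=
  ∀ u v, A u v → ¬ Reaches A v u

/-- If `y` is an in-neighbour of `x` such that `N⁻(x) − y`
cuts `y` from `r`, then deleting the arc `(y, x)` preserves the maximum number
of leaves of an outbranching. -/
lemma lemA {T : V → V → Prop} {x y : V}
    (hux : ∀ w, T w x → w = y) :
    ∀ a, Relation.ReflTransGen T a y →
      Relation.ReflTransGen (fun u v => T u v ∧ v ≠ x) a y := by
  intro a h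
  induction h using Relation.ReflTransGen.head_induction_on with
  | refl => exact .refl
  | head h' hrest ih =>
    rename_i a c
    by_cases hcx : c = x
    · subst hcx
      have : a = y := hux a h'
      subst this
      exact .refl
    · exact .head ⟨h', hcx⟩ ih

lemma lemB {A T : V → V → Prop} {S : Set V} {y : V}
    (hTA : ∀ u v, T u v → A u v) (hyS : y ∉ S) :
    ∀ a, Relation.ReflTransGen T a y → ¬ ReachesAvoiding A S a y →
      ∃ u₀ ∈ S, Relation.ReflTransGen T a u₀ ∧ ∃ w, T u₀ w := by
  intro a h
  induction h using Relation.ReflTransGen.head_induction_on with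
  | refl => intro hna; exact absurd Relation.ReflTransGen.refl hna
  | head h' hrest ih =>
    rename_i a c
    intro hna
    by_cases haS : a ∈ S
    · exact ⟨a, haS, .refl, c, h'⟩
    by_cases hcS : c ∈ S
    · refine ⟨c, hcS, .single h', ?_⟩
      have hcy : c ≠ y := fun h => hyS (h ▸ hcS)
      rcases hrest.cases_head with h | ⟨w, hw, _⟩
      · exact absurd h hcy
      · exact ⟨w, hw⟩
    · obtain ⟨u₀, h1, h2, h3⟩ := ih (fun hra => hna (.head ⟨hTA _ _ h', haS, hcS⟩ hra))
      exact ⟨u₀, h1, .head h' h2, h3⟩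

lemma exists_better [Finite V] (A : V → V → Prop) (r x y : V)
    (hloop : ∀ v, ¬ A v v) (hnr : ∀ v, ¬ A v r)
    (hcut : ¬ ReachesAvoiding A ({u | A u x} \ {y}) r y)
    (T : V → V → Prop) (hT : IsOutbranching A r T) :
    ∃ T', IsOutbranching (fun u v => A u v ∧ ¬(u = y ∧ v = x)) r T' ∧
      leafCount T ≤ leafCount T' := by
  classical
  obtain ⟨hTA, huniq, hnor, hreach⟩ := hT
  by_cases hTyx : T y x
  swap
  · refine ⟨T, ⟨fun u v h => ⟨hTA u v h, fun ⟨h1, h2⟩ => hTyx (h1 ▸ h2 ▸ h)⟩,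
      huniq, hnor, hreach⟩, le_refl _⟩
  · have hAyx : A y x := hTA y x hTyx
    have hxr : x ≠ r := fun h => hnr y (h ▸ hAyx)
    have hux : ∀ w, T w x → w = y := fun w hw => (huniq x hxr).unique hw hTyx
    set S : Set V := {u | A u x} \ {y} with hS
    have hyS : y ∉ S := fun h => h.2 rfl
    have hRy : Relation.ReflTransGen (fun u v => T u v ∧ v ≠ x) r y :=
      lemA hux r (hreach y)
    obtain ⟨u₀, hu₀S, hpath, w, hw, hwx⟩ :=
      lemB (T := fun u v => T u v ∧ v ≠ x) (A := A) (S := S)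
        (fun u v h => hTA u v h.1) hyS r hRy hcut
    have hu₀x : A u₀ x := hu₀S.1
    have hu₀y : u₀ ≠ y := fun h => hu₀S.2 h
    have hu₀nx : u₀ ≠ x := fun h => hloop x (h ▸ hu₀x)
    set T' : V → V → Prop := fun a b => (T a b ∧ b ≠ x) ∨ (a = u₀ ∧ b = x) with hT'
    have hT'sub : ∀ u v, T' u v → A u v ∧ ¬(u = y ∧ v = x) := by
      intro u v h
      rcases h with ⟨h1, h2⟩ | ⟨h1, h2⟩
      · exact ⟨hTA u v h1, fun ⟨_, hv⟩ => h2 hv⟩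
      · subst h1; subst h2
        exact ⟨hu₀x, fun ⟨h1, _⟩ => hu₀y h1⟩
    have hreach' : ∀ v, Reaches T' r v := by
      have hx' : Reaches T' r x := by
        have h1 : Relation.ReflTransGen T' r u₀ :=
          Relation.ReflTransGen.mono (fun a b h => Or.inl h) _ _ hpath
        exact h1.tail (Or.inr ⟨rfl, rfl⟩)
      intro v
      have h := hreach v
      induction h with
      | refl => exact .refl
      | tail h1 h2 ih =>
        rename_i b c
        by_cases hcx : c = x
        · exact hcx ▸ hx'
        · exact ih.tail (Or.inl ⟨h2, hcx⟩)
    refine ⟨T', ⟨hT'sub, ?_, ?_, hreach'⟩, ?_⟩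
    · intro v hv
      by_cases hvx : v = x
      · subst hvx
        refine ⟨u₀, Or.inr ⟨rfl, rfl⟩, ?_⟩
        intro u hu
        rcases hu with ⟨_, h2⟩ | ⟨h1, _⟩
        · exact absurd rfl h2
        · exact h1
      · obtain ⟨u, hu, huu⟩ := huniq v hv
        refine ⟨u, Or.inl ⟨hu, hvx⟩, ?_⟩
        intro u' hu'
        rcases hu' with ⟨h1, _⟩ | ⟨_, h2⟩
        · exact huu u' h1
        · exact absurd h2 hvx
    · intro u hu
      rcases hu with ⟨h1, _⟩ | ⟨_, h2⟩
      · exact hnor u h1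
      · exact hxr h2.symm
    · apply Set.ncard_le_ncard _ (Set.toFinite _)
      intro v hv
      intro u hu
      rcases hu with ⟨h1, _⟩ | ⟨h1, _⟩
      · exact hv u h1
      · exact hv w (h1 ▸ hw)

theorem rule3_safe [Fintype V] (A : V → V → Prop) (r x y : V)
    (hD : IsRootedDigraph A r) (hconn : RConnected A r)
    (hyx : A y x)
    (hcut : ¬ ReachesAvoiding A ({u | A u x} \ {y}) r y) :
    maxleaf (fun u v => A u v ∧ ¬(u = y ∧ v = x)) r = maxleaf A r := by
  classical
  obtain ⟨hloop, hnr, -, -⟩ := hD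
  set A' : V → V → Prop := fun u v => A u v ∧ ¬(u = y ∧ v = x) with hA'
  set SA : Set ℕ := {n | ∃ T : V → V → Prop, IsOutbranching A r T ∧ n = leafCount T}
  set SA' : Set ℕ := {n | ∃ T : V → V → Prop, IsOutbranching A' r T ∧ n = leafCount T}
  have hlc : ∀ T : V → V → Prop, leafCount T ≤ Fintype.card V := by
    intro T
    calc leafCount T ≤ (Set.univ : Set V).ncard :=
          Set.ncard_le_ncard (Set.subset_univ _) Set.finite_univ
      _ = Fintype.card V := by rw [Set.ncard_univ, Nat.card_eq_fintype_card]
  have hbddA : BddAbove SA := ⟨Fintype.card V, fun n ⟨T, _, hn⟩ => hn ▸ hlc T⟩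
  have hbddA' : BddAbove SA' := ⟨Fintype.card V, fun n ⟨T, _, hn⟩ => hn ▸ hlc T⟩
  have hsub : SA' ⊆ SA := by
    rintro n ⟨T, ⟨h1, h2, h3, h4⟩, hn⟩
    exact ⟨T, ⟨fun u v h => (h1 u v h).1, h2, h3, h4⟩, hn⟩
  have htrans : ∀ n ∈ SA, ∃ m ∈ SA', n ≤ m := by
    rintro n ⟨T, hT, hn⟩
    obtain ⟨T', hT', hle⟩ := exists_better A r x y hloop hnr hcut T hT
    exact ⟨leafCount T', ⟨T', hT', rfl⟩, hn ▸ hle⟩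
  apply le_antisymm
  · rcases SA'.eq_empty_or_nonempty with h | h
    · simp [maxleaf, ← hA']
      rw [show {n | ∃ T : V → V → Prop, IsOutbranching A' r T ∧ n = leafCount T} = SA' from rfl, h]
      simp
    · exact csSup_le_csSup hbddA h hsub
  · rcases SA.eq_empty_or_nonempty with h | h
    · rw [show maxleaf A r = sSup SA from rfl, h]
      simp
    · refine csSup_le h ?_
      intro n hn
      obtain ⟨m, hm, hnm⟩ := htrans n hn
      exact hnm.trans (le_csSup hbddA' hm)
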